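/- Let σ ∈ S_{nd} (n ≥ 3) be a permutation supported on {0,...,2d-1} such that σ, ω^d(σ) satisfy the braid relation and σ·ω^d(σ) ≠ ω^d(σ)·σ, and set σ_s = ω^{(s-1)d}(σ) for s = 1,...,n-1. Then the σ_s satisfy the braid relations: σ_r σ_s = σ_s σ_r when |r-s| ≥ 2, and σ_r σ_s σ_r = σ_s σ_r σ_s when |r-s| = 1. Consequently there is a surjective group homomorphism from the Artin braid group B_n onto the subgroup B_n(σ) = ⟨σ₁,...,σ_{n-1}⟩ of S_{nd}, sending the standard generator β_s to σ_s. -/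

import Mathlib

/-- The shift of a permutation of `ℕ` up by `d`: fixes `{0,…,d-1}` and acts as `σ`
conjugated by `k ↦ k + d` above. -/
def shift (d : ℕ) (σ : Equiv.Perm ℕ) : Equiv.Perm ℕ where
  toFun k := if k < d then k else σ (k - d) + d
  invFun k := if k < d then k else σ⁻¹ (k - d) + d
  left_inv k := by
    by_cases h : k < d
    · simp [h]
    · dsimp only
      rw [if_neg h, if_neg (by omega), Nat.add_sub_cancel, show σ⁻¹ (σ (k - d)) = k - d from Equiv.Perm.inv_eq_iff_eq.mpr rfl]
      omega
  right_inv k := by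
    by_cases h : k < d
    · simp [h]
    · dsimp only
      rw [if_neg h, if_neg (by omega), Nat.add_sub_cancel, show σ (σ⁻¹ (k - d)) = k - d from (Equiv.eq_symm_apply σ).mp rfl]
      omega

/-- The involution of `ℕ` swapping the blocks `{0,…,d-1}` and `{d,…,2d-1}`. -/
def theta (d : ℕ) : Equiv.Perm ℕ :=
  Function.Involutive.toPerm
    (fun k => if k < d then k + d else if k < 2 * d then k - d else k)
    (by intro k; dsimp only; split_ifs <;> omega)

/-- The braid relators on generators `β₀,…,β_{m-1}` (so `m = n-1` generators for `Bₙ`):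
`β_rβ_sβ_r⁻¹β_s⁻¹` for `r+2 ≤ s` and `β_rβ_sβ_r(β_sβ_rβ_s)⁻¹` for `s = r+1`. -/
def braidRels (m : ℕ) : Set (FreeGroup (Fin m)) :=
  {x | (∃ r s : Fin m, (r : ℕ) + 2 ≤ (s : ℕ) ∧
        x = .of r * .of s * (.of r)⁻¹ * (.of s)⁻¹) ∨
      (∃ r s : Fin m, (s : ℕ) = (r : ℕ) + 1 ∧
        x = .of r * .of s * .of r * ((.of s) * (.of r) * (.of s))⁻¹)}

lemma shift_apply (d : ℕ) (σ : Equiv.Perm ℕ) (k : ℕ) :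
    shift d σ k = if k < d then k else σ (k - d) + d := rfl

lemma shift_mul (d : ℕ) (σ τ : Equiv.Perm ℕ) :
    shift d (σ * τ) = shift d σ * shift d τ := by
  ext k
  simp only [Equiv.Perm.mul_apply, shift_apply]
  by_cases h : k < d
  · simp [h]
  · rw [if_neg h, if_neg h, if_neg (by omega), Nat.add_sub_cancel]

lemma shift_shift (a b : ℕ) (σ : Equiv.Perm ℕ) :
    shift a (shift b σ) = shift (a + b) σ := by
  ext k
  simp only [shift_apply]
  by_cases h1 : k < a
  · rw [if_pos h1, if_pos (by omega)]
  · rw [if_neg h1]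
    by_cases h2 : k - a < b
    · rw [if_pos h2, if_pos (by omega)]
      omega
    · rw [if_neg h2, if_neg (by omega)]
      have h3 : k - a - b = k - (a + b) := by omega
      rw [h3]
      omega

/-- If `σ` (supported on `{0,…,2d-1}`) and `ω^d(σ)` form a braid-like pair, then the
translates `σ_s = ω^{(s-1)d}(σ)`, `s = 1,…,n-1`, satisfy the braid relations, and
there is a surjective homomorphism from the Artin braid group `Bₙ` onto the subgroup
`Bₙ(σ)` they generate, sending the standard generators to the `σ_s`. -/
theorem stmt_9 (d n : ℕ) (hd : 2 ≤ d) (hn : 3 ≤ n) (σ : Equiv.Perm ℕ)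
    (hfix : ∀ k, 2 * d ≤ k → σ k = k)
    (hbraid : σ * shift d σ * σ = shift d σ * σ * shift d σ)
    (hnc : σ * shift d σ ≠ shift d σ * σ)
    (σs : Fin (n - 1) → Equiv.Perm ℕ)
    (hσs : ∀ s, σs s = shift ((s : ℕ) * d) σ) :
    (∀ r s : Fin (n - 1), (r : ℕ) + 2 ≤ (s : ℕ) → σs r * σs s = σs s * σs r) ∧
      (∀ r s : Fin (n - 1), (s : ℕ) = (r : ℕ) + 1 →
        σs r * σs s * σs r = σs s * σs r * σs s) ∧
      ∃ φ : PresentedGroup (braidRels (n - 1)) →* Equiv.Perm ℕ,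
        (∀ s, φ (PresentedGroup.of s) = σs s) ∧
        MonoidHom.range φ = Subgroup.closure (Set.range σs) := by

  -- σ maps {0,…,2d-1} to itself
  have hlt : ∀ j, j < 2 * d → σ j < 2 * d := by
    intro j hj
    by_contra h
    have h1 : σ (σ j) = σ j := hfix (σ j) (by omega)
    have h2 : σ j = j := σ.injective h1
    omega
  -- points fixed by a shift
  have hfixed : ∀ c k, (k < c ∨ c + 2 * d ≤ k) → shift c σ k = k := by
    intro c k h
    rw [shift_apply]
    rcases h with h | h
    · rw [if_pos h]
    · rw [if_neg (by omega), hfix (k - c) (by omega)]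
      omega
  have hmem : ∀ c k, c ≤ k → k < c + 2 * d → shift c σ k < c + 2 * d := by
    intro c k h1 h2
    rw [shift_apply, if_neg (by omega)]
    have := hlt (k - c) (by omega)
    omega
  have hge : ∀ c k, c ≤ k → c ≤ shift c σ k := by
    intro c k h
    rw [shift_apply, if_neg (by omega)]
    omega
  -- commutation for far-apart shifts
  have hcommgen : ∀ a b : ℕ, a + 2 * d ≤ b →
      shift a σ * shift b σ = shift b σ * shift a σ := by
    intro a b hab
    ext k
    simp only [Equiv.Perm.mul_apply]
    rcases lt_or_ge k a with h1 | h1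
    · have g1 := hfixed a k (Or.inl h1)
      have g2 := hfixed b k (Or.inl (by omega))
      rw [g1, g2, g1]
    · rcases lt_or_ge k (a + 2 * d) with h2 | h2
      · have g2 := hfixed b k (Or.inl (by omega))
        have g3 := hfixed b (shift a σ k) (Or.inl (by have := hmem a k h1 h2; omega))
        rw [g2, g3]
      · rcases lt_or_ge k b with h3 | h3
        · have g1 := hfixed a k (Or.inr h2)
          have g2 := hfixed b k (Or.inl h3)
          rw [g1, g2, g1]
        · have g1 := hfixed a k (Or.inr h2)
          have g4 := hfixed a (shift b σ k) (Or.inr (by have := hge b k h3; omega))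
          rw [g1, g4]
  have hcomm : ∀ r s : Fin (n - 1), (r : ℕ) + 2 ≤ (s : ℕ) → σs r * σs s = σs s * σs r := by
    intro r s hrs
    rw [hσs r, hσs s]
    exact hcommgen _ _ (by nlinarith)
  have hbr : ∀ r s : Fin (n - 1), (s : ℕ) = (r : ℕ) + 1 →
      σs r * σs s * σs r = σs s * σs r * σs s := by
    intro r s hrs
    rw [hσs r, hσs s, hrs]
    have h1 : ((r : ℕ) + 1) * d = (r : ℕ) * d + d := by ring
    rw [h1, ← shift_shift, ← shift_mul, ← shift_mul, hbraid, shift_mul, shift_mul]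
  refine ⟨hcomm, hbr, ?_⟩
  have hrels : ∀ x ∈ braidRels (n - 1), FreeGroup.lift σs x = 1 := by
    rintro x (⟨r, s, hrs, rfl⟩ | ⟨r, s, hrs, rfl⟩)
    · simp only [map_mul, map_inv, FreeGroup.lift_apply_of]
      rw [hcomm r s hrs]
      group
    · simp only [map_mul, map_inv, FreeGroup.lift_apply_of]
      rw [mul_inv_eq_one]
      exact hbr r s hrs
  refine ⟨PresentedGroup.toGroup hrels, fun s => PresentedGroup.toGroup.of hrels, ?_⟩
  rw [MonoidHom.range_eq_map, ← PresentedGroup.closure_range_of, MonoidHom.map_closure,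
    ← Set.range_comp]
  congr 1
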